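/- In the simplified setting where the exposure model is correctly specified (Φ(s) = R(s)γ for all s), monitor and subject locations share the same distribution G, and there are no additional covariates, the second-order Taylor-based asymptotic expectation of β̂_{∞,n*} − β reduces to −β(1/n*)·(r−2)σ²_{η*}/∫ w(s)² dG(s), where r is the dimension of R, σ²_{η*} is the monitor noise variance, and w(s) = R(s)γ. -/
import Mathlib


open MeasureTheory Matrix

/-- In the correctly-specified simplified setting, combining the second-order Taylor
expansion of `f(γ̂) = (γᵀAγ̂)/(γ̂ᵀAγ̂)` with the order-`n*⁻¹` asymptotic covariance
`Cov(γ̂) = σ²A⁻¹` gives the asymptotic bias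
`E(β̂ − β) = −β (1/n*) (r−2) σ² / ∫ w(s)² dG(s)` where `w(s) = R(s)γ`. -/
theorem stmt17 {r : ℕ} (G : Measure (ℝ × ℝ)) [IsProbabilityMeasure G]
    (R : ℝ × ℝ → Fin r → ℝ) (γ : Fin r → ℝ) (β σ2 : ℝ) (nstar : ℕ) (hn : 0 < nstar)
    (hσ : 0 ≤ σ2)
    (A : Matrix (Fin r) (Fin r) ℝ)
    (hA : ∀ i j, A i j = ∫ s, R s i * R s j ∂G)
    (hApos : A.PosDef)
    (hInt : ∀ i j, Integrable (fun s => R s i * R s j) G) :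
    (1 / nstar : ℝ) * β *
        (-(γ ⬝ᵥ A.mulVec γ)⁻¹ * Matrix.trace (A * (σ2 • A⁻¹))
          + 2 * ((γ ⬝ᵥ A.mulVec γ) ^ 2)⁻¹ * (γ ⬝ᵥ (A * (σ2 • A⁻¹) * A).mulVec γ))
      = -β * (1 / nstar : ℝ) * ((r : ℝ) - 2) * σ2 /
          ∫ s, (∑ k, R s k * γ k) ^ 2 ∂G := by
  -- A is invertible
  have hdet : IsUnit A.det := isUnit_iff_ne_zero.mpr hApos.det_pos.ne'
  have hAinv : A * A⁻¹ = 1 := Matrix.mul_nonsing_inv A hdet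
  -- trace term
  have htr : Matrix.trace (A * (σ2 • A⁻¹)) = σ2 * r := by
    rw [Matrix.mul_smul, hAinv, Matrix.trace_smul, Matrix.trace_one]
    simp [smul_eq_mul]
  -- sandwich term
  have hsand : A * (σ2 • A⁻¹) * A = σ2 • A := by
    rw [Matrix.mul_smul, hAinv, Matrix.smul_mul, Matrix.one_mul]
  have hquad : γ ⬝ᵥ (A * (σ2 • A⁻¹) * A).mulVec γ = σ2 * (γ ⬝ᵥ A.mulVec γ) := by
    rw [hsand, Matrix.smul_mulVec, dotProduct_smul, smul_eq_mul]
  -- integral equals the quadratic form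
  have hexp : ∀ s : ℝ × ℝ, (∑ k, R s k * γ k) ^ 2
      = ∑ i, ∑ j, γ i * γ j * (R s i * R s j) := by
    intro s
    rw [sq, Finset.sum_mul_sum]
    exact Finset.sum_congr rfl fun i _ => Finset.sum_congr rfl fun j _ => by ring
  have hint : ∫ s, (∑ k, R s k * γ k) ^ 2 ∂G = γ ⬝ᵥ A.mulVec γ := by
    have h1 : ∫ s, (∑ k, R s k * γ k) ^ 2 ∂G
        = ∑ i, ∑ j, ∫ s, γ i * γ j * (R s i * R s j) ∂G := by
      simp_rw [hexp]
      rw [integral_finset_sum _ fun i _ => integrable_finset_sum _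
        fun j _ => (hInt i j).const_mul _]
      exact Finset.sum_congr rfl fun i _ =>
        integral_finset_sum _ fun j _ => (hInt i j).const_mul _
    rw [h1]
    have h2 : ∀ i j, ∫ s, γ i * γ j * (R s i * R s j) ∂G = γ i * γ j * A i j := by
      intro i j
      rw [integral_const_mul, hA]
    simp_rw [h2, dotProduct, Matrix.mulVec, dotProduct, Finset.mul_sum]
    exact Finset.sum_congr rfl fun i _ => Finset.sum_congr rfl fun j _ => by ring
  rw [htr, hquad, hint]
  set q : ℝ := γ ⬝ᵥ A.mulVec γ with hqdef
  by_cases hq : q = 0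
  · simp [hq]
  · field_simp
    ring
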